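/- Suppose α₀ > 0 and a function P : ℝ → Prop satisfies: P(α₀) holds, P is monotone (P(α) and α ≤ β implies P(β)), and whenever P(α) holds with α > 0, then P(max((1−δ)α, Cδ) + Cε) holds for all 0 < δ, ε ≤ 1, where C ≥ 1 is a fixed constant. Then P(α) holds for every α > 0. -/

import Mathlib

theorem induction_on_scales (C α₀ : ℝ) (hC : 1 ≤ C) (hα₀ : 0 < α₀)
    (P : ℝ → Prop) (hbase : P α₀)
    (hmono : ∀ α β, P α → α ≤ β → P β)
    (hstep : ∀ α, P α → 0 < α → ∀ δ ε : ℝ, 0 < δ → δ ≤ 1 → 0 < ε → ε ≤ 1 →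
      P (max ((1 - δ) * α) (C * δ) + C * ε)) :
    ∀ α : ℝ, 0 < α → P α := by
  intro α hα
  have hCpos : (0:ℝ) < C := lt_of_lt_of_le one_pos hC
  have hCα : 0 < C + α := by linarith
  set δ0 : ℝ := α / (C + α) with hδ0def
  have hδ0pos : 0 < δ0 := div_pos hα hCα
  have hδ0le : δ0 ≤ 1 := by rw [hδ0def, div_le_one hCα]; linarith
  set c : ℝ := δ0 * α / 2 with hcdef
  have hcpos : 0 < c := by positivity
  have key : ∀ n : ℕ, P (max α (α₀ - n * c)) := by
    intro n
    induction n with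
    | zero =>
      refine hmono _ _ hbase ?_
      have := le_max_right α (α₀ - (0:ℕ) * c)
      simpa using this
    | succ n ih =>
      set β := max α (α₀ - n * c) with hβdef
      have hβα : α ≤ β := le_max_left _ _
      have hβpos : 0 < β := lt_of_lt_of_le hα hβα
      set ε : ℝ := min 1 (δ0 * α / (2 * C)) with hεdef
      have hεpos : 0 < ε := lt_min one_pos (by positivity)
      have hεle : ε ≤ 1 := min_le_left _ _
      have hP := hstep β ih hβpos δ0 ε hδ0pos hδ0le hεpos hεle
      have hmaxeq : C * δ0 ≤ (1 - δ0) * β := by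
        have h1 : 1 - δ0 = C / (C + α) := by
          rw [hδ0def]; field_simp; ring
        rw [h1, hδ0def]
        rw [div_mul_eq_mul_div, mul_div_assoc]
        gcongr
      have hCε : C * ε ≤ δ0 * α / 2 := by
        have h := min_le_right 1 (δ0 * α / (2 * C))
        calc C * ε ≤ C * (δ0 * α / (2 * C)) :=
              mul_le_mul_of_nonneg_left h hCpos.le
          _ = δ0 * α / 2 := by field_simp
      have hnew : max ((1 - δ0) * β) (C * δ0) + C * ε ≤ β - c := by
        rw [max_eq_left hmaxeq, hcdef]
        nlinarith [mul_le_mul_of_nonneg_left hβα hδ0pos.le]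
      have hfin : β - c ≤ max α (α₀ - (n + 1 : ℕ) * c) := by
        rcases max_cases α (α₀ - n * c) with ⟨h, _⟩ | ⟨h, _⟩
        · rw [hβdef, h]
          have := le_max_left α (α₀ - (n + 1 : ℕ) * c)
          linarith
        · rw [hβdef, h]
          have := le_max_right α (α₀ - (n + 1 : ℕ) * c)
          push_cast at this ⊢
          linarith
      exact hmono _ _ hP (le_trans hnew hfin)
  obtain ⟨n, hn⟩ := exists_nat_gt ((α₀ - α) / c)
  have hle : α₀ - n * c ≤ α := by
    have := (div_lt_iff₀ hcpos).mp hn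
    linarith
  have := key n
  rwa [max_eq_left hle] at this
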